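/- Let f be a bounded continuous function on the closed strip |Im θ| ≤ ε (ε>0) which is analytic in its interior, and fix l∈Z_5. Then there is at most one bounded analytic function F on the strip |Im θ| ≤ π/3 + ε satisfying e^{−2πil/5}F(θ+iπ/3) + e^{2πil/5}F(θ−iπ/3) − F(θ) = f(θ) for all |Im θ| ≤ ε. -/

import Mathlib

open Complex Set

lemma quasiperiodic_constant (ε p : ℝ) (hε : 0 < ε) (hp : 0 < p) (lam : ℂ)
    (hlam : ‖lam‖ = 1)
    (w : ℂ → ℂ) (hw : DifferentiableOn ℂ w (Complex.im ⁻¹' Set.Ioo (-ε) (p + ε)))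
    (hrel : ∀ z : ℂ, z.im ∈ Set.Ioo (-ε) ε → w (z + p * I) = lam * w z)
    (C : ℝ) (hC : ∀ z : ℂ, z.im ∈ Set.Ioo (-ε) (p + ε) → ‖w z‖ ≤ C) :
    ∀ z₁ z₂ : ℂ, z₁.im ∈ Set.Ioo (-ε) (p + ε) → z₂.im ∈ Set.Ioo (-ε) (p + ε) →
      w z₁ = w z₂ := by
  have hlam0 : lam ≠ 0 := by
    intro h; rw [h] at hlam; simp at hlam
  -- the translated branches
  set wn : ℤ → ℂ → ℂ := fun k z => lam ^ k * w (z - (k : ℂ) * p * I) with hwn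
  have him : ∀ (k : ℤ) (z : ℂ), (z - (k : ℂ) * p * I).im = z.im - k * p := by
    intro k z
    simp [Complex.sub_im, Complex.mul_im]
  -- consecutive branches agree on overlaps
  have hagree : ∀ (k : ℤ) (z : ℂ), z.im ∈ Set.Ioo (((k : ℝ) + 1) * p - ε) (((k : ℝ) + 1) * p + ε) →
      wn k z = wn (k + 1) z := by
    intro k z hz
    have hu : (z - ((k + 1 : ℤ) : ℂ) * p * I).im ∈ Set.Ioo (-ε) ε := by
      rw [him]
      push_cast
      constructor <;> [linarith [hz.1]; linarith [hz.2]]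
    have h1 : z - (k : ℂ) * p * I = (z - ((k + 1 : ℤ) : ℂ) * p * I) + (p : ℂ) * I := by
      push_cast; ring
    have h3 : w (z - (k : ℂ) * p * I) = lam * w (z - ((k + 1 : ℤ) : ℂ) * p * I) := by
      rw [h1]; exact hrel _ hu
    show lam ^ k * w (z - (k : ℂ) * p * I) = lam ^ (k + 1) * w (z - ((k + 1 : ℤ) : ℂ) * p * I)
    rw [h3, zpow_add₀ hlam0, zpow_one]
    ring
  -- chains of agreements
  have hchain : ∀ (a b : ℤ), a ≤ b → ∀ z : ℂ,
      (∀ j : ℤ, a ≤ j → j < b → z.im ∈ Set.Ioo (((j : ℝ) + 1) * p - ε) (((j : ℝ) + 1) * p + ε)) →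
      wn a z = wn b z := by
    intro a b hab
    refine Int.le_induction
      (motive := fun b _ => ∀ z : ℂ,
        (∀ j : ℤ, a ≤ j → j < b → z.im ∈ Set.Ioo (((j : ℝ) + 1) * p - ε) (((j : ℝ) + 1) * p + ε)) →
        wn a z = wn b z) ?_ ?_ b hab
    · intro z _; rfl
    · intro b hab ih z hz
      rw [ih z (fun j hja hjb => hz j hja (by omega)), hagree b z (hz b hab (by omega))]
  -- the entire extension
  set h : ℂ → ℂ := fun z => wn ⌊z.im / p⌋ z with hh
  have hfloor : ∀ z : ℂ, (⌊z.im / p⌋ : ℝ) * p ≤ z.im ∧ z.im < ((⌊z.im / p⌋ : ℝ) + 1) * p := by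
    intro z
    constructor
    · have := Int.floor_le (z.im / p)
      calc (⌊z.im / p⌋ : ℝ) * p ≤ (z.im / p) * p := by nlinarith
        _ = z.im := by field_simp
    · have := Int.lt_floor_add_one (z.im / p)
      have : z.im / p * p < ((⌊z.im / p⌋ : ℝ) + 1) * p := by nlinarith
      calc z.im = z.im / p * p := by field_simp
        _ < _ := this
  -- h agrees with branch k on the k-th (enlarged) strip
  have hglobal : ∀ (k : ℤ) (z : ℂ), z.im ∈ Set.Ioo ((k : ℝ) * p - ε) (((k : ℝ) + 1) * p + ε) →
      h z = wn k z := by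
    intro k z hz
    set m : ℤ := ⌊z.im / p⌋ with hm
    have hf := hfloor z
    rcases le_or_gt k m with hkm | hkm
    · rw [hh]
      simp only [← hm]
      refine (hchain k m hkm z ?_).symm
      intro j hja hjb
      constructor
      · have : ((j : ℝ) + 1) * p ≤ (m : ℝ) * p := by
          have : (j : ℝ) + 1 ≤ (m : ℝ) := by exact_mod_cast (by omega : j + 1 ≤ m)
          nlinarith
        linarith [hf.1]
      · have : ((k : ℝ) + 1) * p ≤ ((j : ℝ) + 1) * p := by
          have : (k : ℝ) ≤ (j : ℝ) := by exact_mod_cast hja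
          nlinarith
        linarith [hz.2]
    · rw [hh]
      simp only [← hm]
      refine hchain m k (le_of_lt hkm) z ?_
      intro j hja hjb
      constructor
      · have : ((j : ℝ) + 1) * p ≤ (k : ℝ) * p := by
          have : (j : ℝ) + 1 ≤ (k : ℝ) := by exact_mod_cast (by omega : j + 1 ≤ k)
          nlinarith
        linarith [hz.1]
      · have : ((m : ℝ) + 1) * p ≤ ((j : ℝ) + 1) * p := by
          have : (m : ℝ) ≤ (j : ℝ) := by exact_mod_cast hja
          nlinarith
        linarith [hf.2]
  have hopen : ∀ k : ℤ, IsOpen (Complex.im ⁻¹' Set.Ioo ((k : ℝ) * p - ε) (((k : ℝ) + 1) * p + ε)) :=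
    fun k => isOpen_Ioo.preimage Complex.continuous_im
  have hbandopen : IsOpen (Complex.im ⁻¹' Set.Ioo (-ε) (p + ε)) :=
    isOpen_Ioo.preimage Complex.continuous_im
  -- differentiability of h
  have hdiff : Differentiable ℂ h := by
    intro z₀
    set k : ℤ := ⌊z₀.im / p⌋ with hk
    have hf := hfloor z₀
    have hz₀mem : z₀ ∈ Complex.im ⁻¹' Set.Ioo ((k : ℝ) * p - ε) (((k : ℝ) + 1) * p + ε) := by
      simp only [Set.mem_preimage, Set.mem_Ioo]
      constructor <;> [linarith [hf.1]; linarith [hf.2]]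
    have hev : h =ᶠ[nhds z₀] wn k := by
      filter_upwards [(hopen k).mem_nhds hz₀mem] with z hz
      exact hglobal k z hz
    rw [hev.differentiableAt_iff]
    have hwm : (z₀ - (k : ℂ) * p * I) ∈ Complex.im ⁻¹' Set.Ioo (-ε) (p + ε) := by
      simp only [Set.mem_preimage, Set.mem_Ioo, him]
      constructor <;> [linarith [hf.1]; linarith [hf.2]]
    have h1 : DifferentiableAt ℂ (fun z => w (z - (k : ℂ) * p * I)) z₀ := by
      have := (hw.differentiableAt (hbandopen.mem_nhds hwm)).comp z₀
        ((differentiable_id.sub_const ((k : ℂ) * p * I)) z₀)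
      exact this
    exact (differentiableAt_const _).mul h1
  -- boundedness of h
  have hbdd : ∀ z : ℂ, ‖h z‖ ≤ C := by
    intro z
    have hf := hfloor z
    have hwm : (z - ((⌊z.im / p⌋ : ℤ) : ℂ) * p * I).im ∈ Set.Ioo (-ε) (p + ε) := by
      rw [him]
      constructor <;> [linarith [hf.1]; linarith [hf.2]]
    rw [hh, hwn]
    simp only [norm_mul, norm_zpow, hlam, one_zpow, one_mul]
    exact hC _ hwm
  -- Liouville
  have hconst : ∀ z₁ z₂ : ℂ, h z₁ = h z₂ := by
    intro z₁ z₂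
    refine hdiff.apply_eq_apply_of_bounded ?_ z₁ z₂
    rw [Metric.isBounded_iff_subset_closedBall 0]
    refine ⟨C, ?_⟩
    rintro x ⟨z, rfl⟩
    simpa [Complex.dist_eq] using hbdd z
  -- h = w on the base band
  have hbase : ∀ z : ℂ, z.im ∈ Set.Ioo (-ε) (p + ε) → h z = w z := by
    intro z hz
    have := hglobal 0 z (by simpa using hz)
    rw [this, hwn]
    simp
  intro z₁ z₂ h₁ h₂
  rw [← hbase z₁ h₁, ← hbase z₂ h₂, hconst z₁ z₂]

/-- Uniqueness of bounded analytic solutions of the shift equation on a strip. -/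
theorem shift_equation_uniqueness (ε : ℝ) (hε : 0 < ε) (l : ℤ) (hl : -2 ≤ l ∧ l ≤ 2)
    (f F₁ F₂ : ℂ → ℂ)
    (hfc : ContinuousOn f {θ : ℂ | |θ.im| ≤ ε})
    (hfa : DifferentiableOn ℂ f {θ : ℂ | |θ.im| < ε})
    (hfb : ∃ C : ℝ, ∀ θ : ℂ, |θ.im| ≤ ε → ‖f θ‖ ≤ C)
    (hF₁c : ContinuousOn F₁ {θ : ℂ | |θ.im| ≤ Real.pi / 3 + ε})
    (hF₁a : DifferentiableOn ℂ F₁ {θ : ℂ | |θ.im| < Real.pi / 3 + ε})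
    (hF₁b : ∃ C : ℝ, ∀ θ : ℂ, |θ.im| ≤ Real.pi / 3 + ε → ‖F₁ θ‖ ≤ C)
    (hF₂c : ContinuousOn F₂ {θ : ℂ | |θ.im| ≤ Real.pi / 3 + ε})
    (hF₂a : DifferentiableOn ℂ F₂ {θ : ℂ | |θ.im| < Real.pi / 3 + ε})
    (hF₂b : ∃ C : ℝ, ∀ θ : ℂ, |θ.im| ≤ Real.pi / 3 + ε → ‖F₂ θ‖ ≤ C)
    (heq₁ : ∀ θ : ℂ, |θ.im| ≤ ε →
      Complex.exp (-(2 * (Real.pi : ℂ) * I * l / 5)) * F₁ (θ + (Real.pi : ℂ) * I / 3)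
        + Complex.exp (2 * (Real.pi : ℂ) * I * l / 5) * F₁ (θ - (Real.pi : ℂ) * I / 3)
        - F₁ θ = f θ)
    (heq₂ : ∀ θ : ℂ, |θ.im| ≤ ε →
      Complex.exp (-(2 * (Real.pi : ℂ) * I * l / 5)) * F₂ (θ + (Real.pi : ℂ) * I / 3)
        + Complex.exp (2 * (Real.pi : ℂ) * I * l / 5) * F₂ (θ - (Real.pi : ℂ) * I / 3)
        - F₂ θ = f θ) :
    ∀ θ : ℂ, |θ.im| ≤ Real.pi / 3 + ε → F₁ θ = F₂ θ := by
  obtain ⟨hl1, hl2⟩ := hl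
  have hπ : (Real.pi : ℂ) ≠ 0 := Complex.ofReal_ne_zero.2 Real.pi_ne_zero
  have hπI : (Real.pi : ℂ) * I ≠ 0 := mul_ne_zero hπ I_ne_zero
  set p : ℝ := Real.pi / 3 with hpdef
  have hp : 0 < p := by rw [hpdef]; positivity
  set q : ℂ := (p : ℂ) * I with hq
  have hq' : (Real.pi : ℂ) * I / 3 = q := by rw [hq, hpdef]; push_cast; ring
  set ω : ℂ := Complex.exp (2 * (Real.pi : ℂ) * I * l / 5) with hω
  have hω0 : ω ≠ 0 := Complex.exp_ne_zero _
  have hcω : Complex.exp (-(2 * (Real.pi : ℂ) * I * l / 5)) * ω = 1 := by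
    rw [hω, ← Complex.exp_add]; simp
  set G : ℂ → ℂ := fun θ => F₁ θ - F₂ θ with hG
  -- the homogeneous shift relation for G
  have hGrel : ∀ θ : ℂ, |θ.im| ≤ ε → G (θ + q) = ω * G θ - ω ^ 2 * G (θ - q) := by
    intro θ hθ
    have h0 : Complex.exp (-(2 * (Real.pi : ℂ) * I * l / 5)) * G (θ + q)
        + ω * G (θ - q) - G θ = 0 := by
      simp only [hG]
      rw [← hq']
      linear_combination heq₁ θ hθ - heq₂ θ hθ
    linear_combination ω * h0 - G (θ + q) * hcω
  -- the eigenvalues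
  set lam₁ : ℂ := Complex.exp ((Real.pi : ℂ) * I / 3) * ω with hlam₁
  set lam₂ : ℂ := Complex.exp (-((Real.pi : ℂ) * I / 3)) * ω with hlam₂
  have e1 : Complex.exp ((Real.pi : ℂ) * I / 3)
      = (1 / 2 : ℂ) + ((Real.sqrt 3 : ℝ) : ℂ) / 2 * I := by
    rw [show (Real.pi : ℂ) * I / 3 = ((Real.pi / 3 : ℝ) : ℂ) * I by push_cast; ring,
      Complex.exp_mul_I, ← Complex.ofReal_cos, ← Complex.ofReal_sin,
      Real.cos_pi_div_three, Real.sin_pi_div_three]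
    push_cast; ring
  have e2 : Complex.exp (-((Real.pi : ℂ) * I / 3))
      = (1 / 2 : ℂ) - ((Real.sqrt 3 : ℝ) : ℂ) / 2 * I := by
    rw [show -((Real.pi : ℂ) * I / 3) = ((-(Real.pi / 3) : ℝ) : ℂ) * I by push_cast; ring,
      Complex.exp_mul_I, ← Complex.ofReal_cos, ← Complex.ofReal_sin,
      Real.cos_neg, Real.sin_neg, Real.cos_pi_div_three, Real.sin_pi_div_three]
    push_cast; ring
  have hsum : lam₁ + lam₂ = ω := by rw [hlam₁, hlam₂, e1, e2]; ring
  have hprod : lam₁ * lam₂ = ω ^ 2 := by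
    have h1 : Complex.exp ((Real.pi : ℂ) * I / 3)
        * Complex.exp (-((Real.pi : ℂ) * I / 3)) = 1 := by
      rw [← Complex.exp_add]; simp
    rw [hlam₁, hlam₂]
    linear_combination ω ^ 2 * h1
  have habsω : ‖ω‖ = 1 := by
    rw [hω, Complex.norm_exp]
    have : (2 * (Real.pi : ℂ) * I * l / 5).re = 0 := by
      simp [Complex.div_re, Complex.mul_re, Complex.mul_im]
    rw [this, Real.exp_zero]
  have habs₁ : ‖lam₁‖ = 1 := by
    rw [hlam₁, norm_mul, habsω, Complex.norm_exp]
    have : ((Real.pi : ℂ) * I / 3).re = 0 := by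
      simp [Complex.div_re, Complex.mul_re, Complex.mul_im]
    rw [this, Real.exp_zero, one_mul]
  have habs₂ : ‖lam₂‖ = 1 := by
    rw [hlam₂, norm_mul, habsω, Complex.norm_exp]
    have : (-((Real.pi : ℂ) * I / 3)).re = 0 := by
      simp [Complex.div_re, Complex.mul_re, Complex.mul_im]
    rw [this, Real.exp_zero, one_mul]
  have hne1 : lam₁ ≠ 1 := by
    intro h
    rw [hlam₁, hω, ← Complex.exp_add, Complex.exp_eq_one_iff] at h
    obtain ⟨n, hn⟩ := h
    have h2 : ((5 + 6 * l : ℤ) : ℂ) * ((Real.pi : ℂ) * I)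
        = ((30 * n : ℤ) : ℂ) * ((Real.pi : ℂ) * I) := by
      push_cast; linear_combination 15 * hn
    have h3 : (5 + 6 * l : ℤ) = 30 * n := by exact_mod_cast mul_right_cancel₀ hπI h2
    omega
  have hne2 : lam₂ ≠ 1 := by
    intro h
    rw [hlam₂, hω, ← Complex.exp_add, Complex.exp_eq_one_iff] at h
    obtain ⟨n, hn⟩ := h
    have h2 : ((-5 + 6 * l : ℤ) : ℂ) * ((Real.pi : ℂ) * I)
        = ((30 * n : ℤ) : ℂ) * ((Real.pi : ℂ) * I) := by
      push_cast; linear_combination 15 * hn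
    have h3 : (-5 + 6 * l : ℤ) = 30 * n := by exact_mod_cast mul_right_cancel₀ hπI h2
    omega
  have hne12 : lam₁ ≠ lam₂ := by
    intro h
    rw [hlam₁, hlam₂] at h
    have h' : Complex.exp ((Real.pi : ℂ) * I / 3)
        = Complex.exp (-((Real.pi : ℂ) * I / 3)) := mul_right_cancel₀ hω0 h
    rw [Complex.exp_eq_exp_iff_exists_int] at h'
    obtain ⟨n, hn⟩ := h'
    have h2 : ((2 : ℤ) : ℂ) * ((Real.pi : ℂ) * I)
        = ((6 * n : ℤ) : ℂ) * ((Real.pi : ℂ) * I) := by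
      push_cast; linear_combination 3 * hn
    have h3 : (2 : ℤ) = 6 * n := by exact_mod_cast mul_right_cancel₀ hπI h2
    omega
  -- analytic and boundedness facts for G
  have hstripopen : IsOpen {θ : ℂ | |θ.im| < p + ε} := by
    have : {θ : ℂ | |θ.im| < p + ε} = Complex.im ⁻¹' Set.Ioo (-(p + ε)) (p + ε) := by
      ext z; simp [abs_lt]
    rw [this]; exact isOpen_Ioo.preimage Complex.continuous_im
  have hGa : DifferentiableOn ℂ G {θ : ℂ | |θ.im| < p + ε} := hF₁a.sub hF₂a
  have hGdiffAt : ∀ z : ℂ, |z.im| < p + ε → DifferentiableAt ℂ G z := fun z hz =>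
    hGa.differentiableAt (hstripopen.mem_nhds hz)
  obtain ⟨C₁, hC₁⟩ := hF₁b
  obtain ⟨C₂, hC₂⟩ := hF₂b
  have hM : ∀ θ : ℂ, |θ.im| ≤ p + ε → ‖G θ‖ ≤ C₁ + C₂ := by
    intro θ hθ
    show ‖F₁ θ - F₂ θ‖ ≤ C₁ + C₂
    calc ‖F₁ θ - F₂ θ‖ ≤ ‖F₁ θ‖ + ‖F₂ θ‖ := norm_sub_le _ _
      _ ≤ C₁ + C₂ := add_le_add (hC₁ θ hθ) (hC₂ θ hθ)
  have him_q : ∀ z : ℂ, (z - q).im = z.im - p := by intro z; simp [hq]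
  have him_q' : ∀ z : ℂ, (z + q).im = z.im + p := by intro z; simp [hq]
  -- the two diagonalizing combinations
  set w₁ : ℂ → ℂ := fun θ => G θ - lam₂ * G (θ - q) with hw₁
  set w₂ : ℂ → ℂ := fun θ => G θ - lam₁ * G (θ - q) with hw₂
  have hdw : ∀ lam : ℂ, DifferentiableOn ℂ (fun θ => G θ - lam * G (θ - q))
      (Complex.im ⁻¹' Set.Ioo (-ε) (p + ε)) := by
    intro lam z hz
    simp only [Set.mem_preimage, Set.mem_Ioo] at hz
    have h1 : DifferentiableAt ℂ G z := hGdiffAt z (by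
      rw [abs_lt]; constructor <;> [linarith [hz.1]; linarith [hz.2]])
    have h2 : DifferentiableAt ℂ (fun θ => G (θ - q)) z := by
      exact (hGdiffAt (z - q) (by
        rw [abs_lt, him_q]; constructor <;> [linarith [hz.1]; linarith [hz.2]])).comp z
        ((differentiable_id.sub_const q) z)
    exact (h1.sub ((differentiableAt_const lam).mul h2)).differentiableWithinAt
  have hbound : ∀ lam : ℂ, ‖lam‖ = 1 → ∀ z : ℂ, z.im ∈ Set.Ioo (-ε) (p + ε) →
      ‖G z - lam * G (z - q)‖ ≤ (C₁ + C₂) + (C₁ + C₂) := by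
    intro lam hlam z hz
    have h1 : ‖G z‖ ≤ C₁ + C₂ := hM z (by
      rw [abs_le]; constructor <;> [linarith [hz.1]; linarith [hz.2]])
    have h2 : ‖G (z - q)‖ ≤ C₁ + C₂ := hM (z - q) (by
      rw [abs_le, him_q]; constructor <;> [linarith [hz.1]; linarith [hz.2]])
    calc ‖G z - lam * G (z - q)‖
        ≤ ‖G z‖ + ‖lam * G (z - q)‖ := by
          exact norm_sub_le _ _
      _ = ‖G z‖ + ‖G (z - q)‖ := by rw [norm_mul, hlam, one_mul]
      _ ≤ (C₁ + C₂) + (C₁ + C₂) := add_le_add h1 h2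
  -- quasi-periodicity relations
  have hrel₁ : ∀ z : ℂ, z.im ∈ Set.Ioo (-ε) ε → w₁ (z + (p : ℂ) * I) = lam₁ * w₁ z := by
    intro z hz
    have hz' : |z.im| ≤ ε := by
      rw [abs_le]; constructor <;> [linarith [hz.1]; linarith [hz.2]]
    have hGr := hGrel z hz'
    simp only [hw₁]
    rw [show z + (p : ℂ) * I - q = z by rw [hq]; ring, show z + (p : ℂ) * I = z + q from by rw [hq]]
    linear_combination hGr - G z * hsum + G (z - q) * hprod
  have hrel₂ : ∀ z : ℂ, z.im ∈ Set.Ioo (-ε) ε → w₂ (z + (p : ℂ) * I) = lam₂ * w₂ z := by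
    intro z hz
    have hz' : |z.im| ≤ ε := by
      rw [abs_le]; constructor <;> [linarith [hz.1]; linarith [hz.2]]
    have hGr := hGrel z hz'
    simp only [hw₂]
    rw [show z + (p : ℂ) * I - q = z by rw [hq]; ring, show z + (p : ℂ) * I = z + q from by rw [hq]]
    linear_combination hGr - G z * hsum + G (z - q) * hprod
  -- constancy from the auxiliary lemma
  have hconst₁ := quasiperiodic_constant ε p hε hp lam₁ habs₁ w₁ (hdw lam₂) hrel₁
    ((C₁ + C₂) + (C₁ + C₂)) (fun z hz => hbound lam₂ habs₂ z hz)
  have hconst₂ := quasiperiodic_constant ε p hε hp lam₂ habs₂ w₂ (hdw lam₁) hrel₂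
    ((C₁ + C₂) + (C₁ + C₂)) (fun z hz => hbound lam₁ habs₁ z hz)
  -- both combinations vanish
  have h0m : (0 : ℂ).im ∈ Set.Ioo (-ε) (p + ε) := by
    simp only [Complex.zero_im, Set.mem_Ioo]; constructor <;> linarith
  have hqm : ((0 : ℂ) + (p : ℂ) * I).im ∈ Set.Ioo (-ε) (p + ε) := by
    rw [him_q']
    simp only [Complex.zero_im, Set.mem_Ioo]; constructor <;> linarith
  have h0ε : (0 : ℂ).im ∈ Set.Ioo (-ε) ε := by
    simp only [Complex.zero_im, Set.mem_Ioo]; constructor <;> linarith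
  have hw₁0 : ∀ z : ℂ, z.im ∈ Set.Ioo (-ε) (p + ε) → w₁ z = 0 := by
    have e1 := hrel₁ 0 h0ε
    have e2 := hconst₁ ((0 : ℂ) + (p : ℂ) * I) 0 hqm h0m
    have e3 : (lam₁ - 1) * w₁ 0 = 0 := by linear_combination e2 - e1
    have e4 : w₁ 0 = 0 := by
      rcases mul_eq_zero.1 e3 with h | h
      · exact absurd (show lam₁ = 1 by linear_combination h) hne1
      · exact h
    intro z hz
    rw [hconst₁ z 0 hz h0m, e4]
  have hw₂0 : ∀ z : ℂ, z.im ∈ Set.Ioo (-ε) (p + ε) → w₂ z = 0 := by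
    have e1 := hrel₂ 0 h0ε
    have e2 := hconst₂ ((0 : ℂ) + (p : ℂ) * I) 0 hqm h0m
    have e3 : (lam₂ - 1) * w₂ 0 = 0 := by linear_combination e2 - e1
    have e4 : w₂ 0 = 0 := by
      rcases mul_eq_zero.1 e3 with h | h
      · exact absurd (show lam₂ = 1 by linear_combination h) hne2
      · exact h
    intro z hz
    rw [hconst₂ z 0 hz h0m, e4]
  -- G vanishes on the strip
  have hGzero' : ∀ θ : ℂ, θ.im ∈ Set.Ioo (-ε) (p + ε) → G (θ - q) = 0 ∧ G θ = 0 := by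
    intro θ hθ
    have e1 := hw₁0 θ hθ
    have e2 := hw₂0 θ hθ
    simp only [hw₁, hw₂] at e1 e2
    have e3 : (lam₁ - lam₂) * G (θ - q) = 0 := by linear_combination e1 - e2
    have e4 : G (θ - q) = 0 := by
      rcases mul_eq_zero.1 e3 with h | h
      · exact absurd (show lam₁ = lam₂ by linear_combination h) hne12
      · exact h
    refine ⟨e4, ?_⟩
    linear_combination e1 + lam₂ * e4
  have hGzero : ∀ θ : ℂ, |θ.im| < p + ε → G θ = 0 := by
    intro θ hθ
    rw [abs_lt] at hθ
    rcases lt_or_ge (-ε) θ.im with h | h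
    · exact (hGzero' θ ⟨h, hθ.2⟩).2
    · have hm : (θ + q).im ∈ Set.Ioo (-ε) (p + ε) := by
        rw [him_q']
        constructor
        · linarith [hθ.1]
        · linarith
      have := (hGzero' (θ + q) hm).1
      rwa [show θ + q - q = θ by ring] at this
  -- boundary points by continuity
  have hGc : ContinuousOn G {θ : ℂ | |θ.im| ≤ p + ε} := hF₁c.sub hF₂c
  intro θ hθ
  have hGθ : G θ = 0 := by
    set φ : ℝ → ℂ := fun t => (θ.re : ℂ) + (t : ℂ) * (θ.im : ℂ) * I with hφ
    have hφc : Continuous φ := by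
      rw [hφ]
      exact continuous_const.add
        ((Complex.continuous_ofReal.mul continuous_const).mul continuous_const)
    have hφim : ∀ t : ℝ, (φ t).im = t * θ.im := by
      intro t; simp [hφ]
    have hmaps : Set.MapsTo φ (Set.Icc (0 : ℝ) 1) {θ : ℂ | |θ.im| ≤ p + ε} := by
      intro t ht
      simp only [Set.mem_setOf_eq, hφim, abs_mul]
      calc |t| * |θ.im| ≤ 1 * (p + ε) := by
            apply mul_le_mul _ hθ (abs_nonneg _) zero_le_one
            rw [abs_le]; exact ⟨by linarith [ht.1], ht.2⟩
        _ = p + ε := one_mul _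
    have hcont : ContinuousOn (G ∘ φ) (Set.Icc 0 1) := hGc.comp hφc.continuousOn hmaps
    haveI hne : (nhdsWithin (1 : ℝ) (Set.Ico 0 1)).NeBot := by
      refine mem_closure_iff_nhdsWithin_neBot.1 ?_
      rw [closure_Ico (by norm_num : (0 : ℝ) ≠ 1)]
      exact ⟨by norm_num, le_refl 1⟩
    have h1 : Filter.Tendsto (G ∘ φ) (nhdsWithin 1 (Set.Ico 0 1)) (nhds ((G ∘ φ) 1)) :=
      ((hcont 1 ⟨by norm_num, le_refl 1⟩).mono Set.Ico_subset_Icc_self).tendsto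
    have h2 : Filter.Tendsto (G ∘ φ) (nhdsWithin 1 (Set.Ico 0 1)) (nhds 0) := by
      refine Filter.Tendsto.congr' ?_ tendsto_const_nhds
      refine Filter.eventually_of_mem self_mem_nhdsWithin (fun t ht => ?_)
      have : |(φ t).im| < p + ε := by
        rw [hφim, abs_mul]
        have ht0 : |t| = t := abs_of_nonneg ht.1
        calc |t| * |θ.im| ≤ |t| * (p + ε) := by
              apply mul_le_mul_of_nonneg_left hθ (abs_nonneg t)
          _ < 1 * (p + ε) := by
              apply mul_lt_mul_of_pos_right _ (by linarith)
              rw [ht0]; exact ht.2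
          _ = p + ε := one_mul _
      exact (hGzero (φ t) this).symm
    have h3 : (G ∘ φ) 1 = 0 := tendsto_nhds_unique h1 h2
    have h4 : φ 1 = θ := by
      rw [hφ]; simp [Complex.re_add_im]
    rwa [Function.comp_apply, h4] at h3
  have := sub_eq_zero.1 (by simpa [hG] using hGθ)
  exact this
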